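/- Let Σ be a type, M a monoid, and Φ : Σ* → ◊M a monoid homomorphism from the free monoid on Σ; write Φ(w) = (σ(w), h(w)). Then for every word w = w₀⋯w_{|w|−1} ∈ Σ*, σ(w) = ⋃_{0 ≤ i < |w|} h(w₀⋯w_{i−1}) · σ(w_i) · h(w_{i+1}⋯w_{|w|−1}), where for m, m' ∈ M and a finite set T ⊆ M, m·T·m' := {m·t·m' : t ∈ T}. -/
import Mathlib

/-- The multiplication of the unary Schützenberger product `◊M` on `Finset M × M`:
`(S, m) * (T, n) = (S·n ∪ m·T, m·n)`. -/
def dMul {M : Type*} [Monoid M] [DecidableEq M] (p q : Finset M × M) : Finset M × M :=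
  (p.1.image (fun s => s * q.2) ∪ q.1.image (fun t => p.2 * t), p.2 * q.2)

/-- For a monoid homomorphism `Φ = (σ, h) : Σ* → ◊M` and a word `w`,
`σ(w) = ⋃_{i < |w|} h(w₀⋯w_{i−1}) · σ(w_i) · h(w_{i+1}⋯w_{|w|−1})`. -/
theorem stmt13 {A M : Type*} [Monoid M] [DecidableEq M]
    (Φ : List A → Finset M × M)
    (hone : Φ [] = (∅, 1))
    (hmul : ∀ v w : List A, Φ (v ++ w) = dMul (Φ v) (Φ w)) :
    ∀ w : List A,
      ((Φ w).1 : Set M) =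
        ⋃ i : Fin w.length,
          (fun t => (Φ (w.take i)).2 * t * (Φ (w.drop (i + 1))).2) ''
            ((Φ [w.get i]).1 : Set M) := by
  intro w
  induction w with
  | nil => simp [hone]
  | cons a w ih =>
    have hcons : ∀ l : List A, Φ (a :: l) = dMul (Φ [a]) (Φ l) := fun l => by
      simpa using hmul [a] l
    have htake : ∀ i : ℕ, (Φ (a :: w.take i)).2 = (Φ [a]).2 * (Φ (w.take i)).2 := fun i => by
      rw [hcons (w.take i)]; rfl
    ext x
    rw [hcons]
    simp only [dMul, Finset.coe_union, Finset.coe_image, Set.mem_union, Set.mem_image,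
      Set.mem_iUnion, List.length_cons, Fin.exists_fin_succ, Fin.val_zero, Fin.val_succ,
      List.take_zero, List.drop_succ_cons, List.take_succ_cons, List.get_cons_succ,
      List.get_cons_zero, hone, one_mul, List.drop_zero, htake]
    rw [ih]
    simp only [Set.mem_iUnion, Set.mem_image]
    constructor
    · rintro (⟨s, hs, rfl⟩ | ⟨t, ⟨i, s, hs, rfl⟩, rfl⟩)
      · exact Or.inl ⟨s, hs, rfl⟩
      · exact Or.inr ⟨i, s, hs, by simp [mul_assoc]⟩
    · rintro (⟨s, hs, rfl⟩ | ⟨i, s, hs, rfl⟩)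
      · exact Or.inl ⟨s, hs, rfl⟩
      · exact Or.inr ⟨_, ⟨i, s, hs, rfl⟩, by simp [mul_assoc]⟩
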